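/- Let (S_1, …, S_n, S_{n+1}) be an exchangeable sequence of random variables with values in the extended real line [−∞, +∞], let α ∈ (0, 1), and set k = ⌈(n+1)(1−α)⌉. Define the (random) conformal threshold τ_α = OS_k(S_1, …, S_n) (the k-th smallest of the n calibration scores) if k ≤ n, and τ_α = +∞ if k > n. Then P(S_{n+1} ≤ τ_α) ≥ 1 − α, and this holds regardless of whether ties exist among the scores. -/

import Mathlib

open MeasureTheory

/-- A finite sequence of random variables `Z : Fin m → Ω → α` is exchangeable
(w.r.t. the probability measure `μ`) if for every permutation `σ` of `Fin m`,
the joint law of the permuted sequence equals the joint law of the original one. -/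
def Exchangeable {Ω α : Type*} [MeasurableSpace Ω] [MeasurableSpace α] {m : ℕ}
    (μ : Measure Ω) (Z : Fin m → Ω → α) : Prop :=
  ∀ σ : Equiv.Perm (Fin m),
    Measure.map (fun ω => fun i => Z (σ i) ω) μ = Measure.map (fun ω => fun i => Z i ω) μ

/-- The `k`-th order statistic (0-indexed: `k : Fin m` gives the `(k+1)`-th smallest
element, counted with multiplicity) of the values `s 0, …, s (m-1)`. -/
noncomputable def orderStat {α : Type*} [LinearOrder α] {m : ℕ}
    (s : Fin m → α) (k : Fin m) : α :=
  s (Tuple.sort s k)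


open Finset
open scoped ENNReal

lemma card_filter_perm {m : ℕ} (σ : Equiv.Perm (Fin m)) (p : Fin m → Prop) [DecidablePred p] :
    #(univ.filter fun i => p (σ i)) = #(univ.filter p) :=
  Finset.card_equiv σ (by simp)

lemma mono_filter_subset {α : Type*} [LinearOrder α] {m : ℕ} {t : Fin m → α}
    (ht : Monotone t) {x : α} {j : Fin m} (hx : x ≤ t j) :
    (univ.filter fun i => t i < x) ⊆ Finset.Iio j := by
  intro i hi
  simp only [mem_filter] at hi
  simp only [Finset.mem_Iio]
  by_contra h
  exact absurd (lt_of_lt_of_le hi.2 (hx.trans (ht (not_lt.1 h)))) (lt_irrefl _)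

lemma le_orderStat_iff {α : Type*} [LinearOrder α] {m : ℕ} (s : Fin m → α) (k : Fin m) (x : α) :
    x ≤ orderStat s k ↔ #(univ.filter fun i => s i < x) ≤ (k : ℕ) := by
  classical
  set σ := Tuple.sort s with hσ
  have hmono : Monotone (s ∘ σ) := Tuple.monotone_sort s
  have hcard : #(univ.filter fun i => s (σ i) < x) = #(univ.filter fun i => s i < x) :=
    card_filter_perm σ (fun i => s i < x)
  rw [← hcard]
  show x ≤ s (σ k) ↔ _
  constructor
  · intro h
    calc #(univ.filter fun i => s (σ i) < x) ≤ #(Finset.Iio k) :=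
          Finset.card_le_card (mono_filter_subset hmono (j := k) h)
      _ = (k : ℕ) := Fin.card_Iio k
  · intro h
    by_contra hlt
    push_neg at hlt
    have hsub : Finset.Iic k ⊆ univ.filter fun i => s (σ i) < x := by
      intro i hi
      simp only [Finset.mem_Iic] at hi
      exact mem_filter.2 ⟨mem_univ _, lt_of_le_of_lt (hmono hi) hlt⟩
    have := Finset.card_le_card hsub
    rw [Fin.card_Iic] at this
    omega

lemma count_small_ranks {α : Type*} [LinearOrder α] {m : ℕ} (v : Fin m → α) (K : ℕ) (hK : K ≤ m) :
    K ≤ #(univ.filter fun j => #(univ.filter fun i => v i < v j) < K) := by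
  classical
  set σ := Tuple.sort v with hσ
  have hmono : Monotone (v ∘ σ) := Tuple.monotone_sort v
  have hle : #(univ : Finset (Fin K)) ≤
      #(univ.filter fun j => #(univ.filter fun i => v i < v j) < K) := by
    apply Finset.card_le_card_of_injOn (fun r => σ (Fin.castLE hK r))
    · intro r _
      refine mem_filter.2 ⟨mem_univ _, ?_⟩
      have h1 : #(univ.filter fun i => v i < v (σ (Fin.castLE hK r)))
          = #(univ.filter fun i => v (σ i) < v (σ (Fin.castLE hK r))) :=
        (card_filter_perm σ (fun i => v i < v (σ (Fin.castLE hK r)))).symm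
      rw [h1]
      have h2 : (univ.filter fun i => v (σ i) < v (σ (Fin.castLE hK r)))
          ⊆ Finset.Iio (Fin.castLE hK r) :=
        mono_filter_subset hmono (le_refl ((v ∘ σ) (Fin.castLE hK r)))
      calc #(univ.filter fun i => v (σ i) < v (σ (Fin.castLE hK r)))
            ≤ #(Finset.Iio (Fin.castLE hK r)) := Finset.card_le_card h2
        _ = ((Fin.castLE hK r : Fin m) : ℕ) := Fin.card_Iio _
        _ < K := r.isLt
    · intro r _ r' _ hrr
      exact Fin.castLE_injective hK (σ.injective hrr)
  simpa using hle

lemma measurable_count {m : ℕ} (j : Fin m) :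
    Measurable (fun v : Fin m → EReal => #(univ.filter fun i => v i < v j)) := by
  classical
  have heq : (fun v : Fin m → EReal => #(univ.filter fun i => v i < v j))
      = fun v => ∑ i, if v i < v j then 1 else 0 := by
    funext v
    have := Finset.natCast_card_filter (R := ℕ) (fun i => v i < v j) univ
    simpa using this
  rw [heq]
  exact Finset.measurable_sum _ fun i _ => Measurable.ite
    (measurableSet_lt (measurable_pi_apply i) (measurable_pi_apply j))
    measurable_const measurable_const

lemma filter_lt_last {m : ℕ} {α : Type*} [LinearOrder α] (w : Fin (m+1) → α) :
    #(univ.filter fun i : Fin (m+1) => w i < w (Fin.last m))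
      = #(univ.filter fun i : Fin m => w i.castSucc < w (Fin.last m)) := by
  classical
  rw [Fin.univ_castSuccEmb, Finset.filter_cons, if_neg (lt_irrefl _), Finset.filter_map,
    Finset.card_map]
  rfl


/-- Coverage under exchangeability (split conformal prediction): for an exchangeable
sequence `(S 1, …, S n, S (n+1))` of extended-real scores, a risk level `α ∈ (0,1)`,
and `k = ⌈(n+1)(1-α)⌉`, the test score `S (n+1)` is at or below the conformal
threshold `τ_α` (the `k`-th smallest of the `n` calibration scores if `k ≤ n`, and
`+∞` if `k > n`) with probability at least `1 - α`, regardless of ties. -/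
theorem conformal_coverage
    {Ω : Type*} [MeasurableSpace Ω] {n : ℕ}
    (μ : Measure Ω) [IsProbabilityMeasure μ]
    (S : Fin (n + 1) → Ω → EReal) (hSmeas : ∀ i, Measurable (S i))
    (hexch : Exchangeable μ S)
    (a : ℝ) (ha : a ∈ Set.Ioo (0 : ℝ) 1)
    (k : ℕ) (hk : k = ⌈((n : ℝ) + 1) * (1 - a)⌉₊) :
    ENNReal.ofReal (1 - a) ≤
      μ {ω | S (Fin.last n) ω ≤
        if h : k ≤ n then
          orderStat (fun i : Fin n => S (Fin.castSucc i) ω)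
            ⟨k - 1, by
              have h1 : 0 < k := by
                rw [hk]
                exact Nat.ceil_pos.mpr (mul_pos (by positivity) (sub_pos.mpr ha.2))
              omega⟩
        else (⊤ : EReal)} := by
  classical
  have hk1 : 0 < k := by
    rw [hk]
    exact Nat.ceil_pos.mpr (mul_pos (by positivity) (sub_pos.mpr ha.2))
  by_cases hkn : k ≤ n
  · simp only [dif_pos hkn]
    -- the count sets
    set B : Fin (n + 1) → Set (Fin (n + 1) → EReal) :=
      fun j => {v | #(univ.filter fun i => v i < v j) < k} with hB
    have hBmeas : ∀ j, MeasurableSet (B j) := by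
      intro j
      have : B j = (fun v : Fin (n+1) → EReal => #(univ.filter fun i => v i < v j)) ⁻¹'
          (Set.Iio k) := rfl
      rw [this]
      exact measurable_count j (by trivial)
    set A : Fin (n + 1) → Set Ω :=
      fun j => {ω | #(univ.filter fun i : Fin (n+1) => S i ω < S j ω) < k} with hA
    have hSvec : Measurable (fun ω => fun i => S i ω) := measurable_pi_lambda _ hSmeas
    have hApre : ∀ j, A j = (fun ω => fun i => S i ω) ⁻¹' (B j) := fun j => rfl
    have hAmeas : ∀ j, MeasurableSet (A j) := fun j => (hApre j) ▸ hSvec (hBmeas j)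
    -- the event equals A (last n)
    have hevent : {ω | S (Fin.last n) ω ≤
        orderStat (fun i : Fin n => S (Fin.castSucc i) ω)
          ⟨k - 1, by omega⟩} = A (Fin.last n) := by
      ext ω
      simp only [hA, Set.mem_setOf_eq]
      rw [le_orderStat_iff]
      have hval : ((⟨k - 1, by omega⟩ : Fin n) : ℕ) = k - 1 := rfl
      rw [hval, filter_lt_last (fun i => S i ω)]
      omega
    rw [hevent]
    -- all A j have the same measure
    have hAj : ∀ j, μ (A j) = μ (A (Fin.last n)) := by
      intro j
      have hperm : Measurable (fun ω => fun i => S ((Equiv.swap j (Fin.last n)) i) ω) :=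
        measurable_pi_lambda _ fun i => hSmeas _
      have h1 : μ (A (Fin.last n)) =
          Measure.map (fun ω => fun i => S i ω) μ (B (Fin.last n)) := by
        rw [hApre (Fin.last n)]
        exact (Measure.map_apply hSvec (hBmeas _)).symm
      rw [h1, ← hexch (Equiv.swap j (Fin.last n)), Measure.map_apply hperm (hBmeas _)]
      congr 1
      ext ω
      simp only [hB, hA, Set.mem_preimage, Set.mem_setOf_eq, Equiv.swap_apply_right]
      have h4 : #(univ.filter fun i => S ((Equiv.swap j (Fin.last n)) i) ω < S j ω)
          = #(univ.filter fun i => S i ω < S j ω) :=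
        card_filter_perm _ (fun i => S i ω < S j ω)
      rw [h4]
    -- pointwise: at least k of the indicators are 1
    have hpt : ∀ ω, (k : ℝ≥0∞) ≤ ∑ j, (A j).indicator (1 : Ω → ℝ≥0∞) ω := by
      intro ω
      have h1 : ∑ j, (A j).indicator (1 : Ω → ℝ≥0∞) ω
          = ((#(univ.filter fun j => ω ∈ A j) : ℕ) : ℝ≥0∞) := by
        rw [Finset.natCast_card_filter]
        simp [Set.indicator_apply]
      rw [h1]
      have h2 := count_small_ranks (fun i => S i ω) k (by omega)
      have h3 : (univ.filter fun j => ω ∈ A j)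
          = (univ.filter fun j => #(univ.filter fun i => S i ω < S j ω) < k) := by
        apply Finset.filter_congr
        intro j _
        simp [hA, Set.mem_setOf_eq]
      rw [h3]
      exact_mod_cast h2
    have hksum : (k : ℝ≥0∞) ≤ ∑ j, μ (A j) := by
      calc (k : ℝ≥0∞) = ∫⁻ _, (k : ℝ≥0∞) ∂μ := by
            rw [lintegral_const, measure_univ, mul_one]
        _ ≤ ∫⁻ ω, ∑ j, (A j).indicator (1 : Ω → ℝ≥0∞) ω ∂μ := lintegral_mono hpt
        _ = ∑ j, ∫⁻ ω, (A j).indicator (1 : Ω → ℝ≥0∞) ω ∂μ :=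
            lintegral_finset_sum _ fun j _ => measurable_one.indicator (hAmeas j)
        _ = ∑ j, μ (A j) :=
            Finset.sum_congr rfl fun j _ => lintegral_indicator_one (hAmeas j)
    have hsum_eq : ∑ j : Fin (n+1), μ (A j) = ((n : ℝ≥0∞) + 1) * μ (A (Fin.last n)) := by
      rw [Finset.sum_congr rfl fun j _ => hAj j, Finset.sum_const, Finset.card_univ,
        Fintype.card_fin, nsmul_eq_mul]
      push_cast
      ring
    have hmain : (k : ℝ≥0∞) ≤ ((n : ℝ≥0∞) + 1) * μ (A (Fin.last n)) := hsum_eq ▸ hksum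
    have hkreal : ((n : ℝ) + 1) * (1 - a) ≤ (k : ℝ) := by
      rw [hk]; exact Nat.le_ceil _
    have hcast : ((n : ℝ≥0∞) + 1) = ENNReal.ofReal ((n : ℝ) + 1) := by
      rw [ENNReal.ofReal_add (by positivity) (by norm_num)]
      simp [ENNReal.ofReal_natCast]
    have hstep : ((n : ℝ≥0∞) + 1) * ENNReal.ofReal (1 - a)
        ≤ ((n : ℝ≥0∞) + 1) * μ (A (Fin.last n)) := by
      refine le_trans ?_ hmain
      rw [hcast, ← ENNReal.ofReal_mul (by positivity), ← ENNReal.ofReal_natCast k]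
      exact ENNReal.ofReal_le_ofReal hkreal
    exact (ENNReal.mul_le_mul_iff_right (by simp) (by simp)).mp hstep
  · simp only [dif_neg hkn]
    have huniv : {ω | S (Fin.last n) ω ≤ (⊤ : EReal)} = Set.univ :=
      Set.eq_univ_of_forall fun ω => show S (Fin.last n) ω ≤ ⊤ from le_top
    rw [huniv, measure_univ]
    exact ENNReal.ofReal_le_one.mpr (by linarith [ha.1])
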